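/- Let G be a finite connected graph on n ≥ 2 vertices and r > 1. The expected absorption time τ of the Moran process on G satisfies E[τ] ≤ (r/(r−1))·n³·φ(G) ≤ (r/(r−1))·n⁴, where φ(G) = ∑_{x∈V} 1/deg(x). -/

import Mathlib

set_option linter.unusedSectionVars false
set_option maxHeartbeats 1000000
open Finset

/-- Total fitness of the population when the mutant set is `S`:
`W(S) = r·|S| + (n - |S|) = n + (r-1)·|S|`. -/
noncomputable def moranW {V : Type*} [Fintype V] (r : ℝ) (S : Finset V) : ℝ :=
  r * S.card + ((Fintype.card V : ℝ) - S.card)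

/-- One-step transition probability of the Moran process on the graph `G` with mutant
fitness `r`: an individual `x` is chosen with probability proportional to its fitness
(`r` if `x ∈ S`, else `1`), and it reproduces onto a uniformly random neighbour `y`,
which becomes a mutant if `x` is a mutant and a non-mutant otherwise. -/
noncomputable def moranP {V : Type*} [Fintype V] [DecidableEq V] (G : SimpleGraph V)
    [DecidableRel G.Adj] (r : ℝ) (S T : Finset V) : ℝ :=
  ∑ x : V, ∑ y ∈ G.neighborFinset x,
    (if x ∈ S then r else 1) / (moranW r S * G.degree x) *
      (if (if x ∈ S then insert y S else S.erase y) = T then 1 else 0)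

/-- The potential function `φ(X) = ∑_{x ∈ X} 1/deg x`. -/
noncomputable def moranPhi {V : Type*} [Fintype V] (G : SimpleGraph V) [DecidableRel G.Adj]
    (X : Finset V) : ℝ :=
  ∑ x ∈ X, (1 : ℝ) / G.degree x

section MoranAux
variable {V : Type*} [Fintype V] [DecidableEq V] (G : SimpleGraph V) [DecidableRel G.Adj]

lemma moran_deg_pos (hG : G.Connected) (hn : 2 ≤ Fintype.card V) (x : V) :
    0 < G.degree x := by
  rw [SimpleGraph.degree_pos_iff_exists_adj]
  obtain ⟨y, hy⟩ := Fintype.exists_ne_of_one_lt_card (by omega) x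
  obtain ⟨w⟩ := hG.preconnected x y
  cases w with
  | nil => simp at hy
  | cons ha p => exact ⟨_, ha⟩

lemma moranW_pos (r : ℝ) (hr : 1 < r) (S : Finset V) (hn : 2 ≤ Fintype.card V) :
    0 < moranW r S := by
  have h1 : (S.card : ℝ) ≤ (Fintype.card V : ℝ) := by
    exact_mod_cast Finset.card_le_card (Finset.subset_univ S) |>.trans_eq (by simp)
  have h2 : (0:ℝ) ≤ (S.card : ℝ) := by positivity
  have h3 : (2:ℝ) ≤ (Fintype.card V : ℝ) := by exact_mod_cast hn
  unfold moranW; nlinarith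

lemma sum_fitness (r : ℝ) (S : Finset V) :
    ∑ x : V, (if x ∈ S then r else 1) = moranW r S := by
  rw [Finset.sum_ite, Finset.sum_const, Finset.sum_const]
  have h1 : Finset.univ.filter (fun x => x ∈ S) = S := by
    ext x; simp
  have h2 : Finset.univ.filter (fun x => ¬ x ∈ S) = Sᶜ := by
    ext x; simp
  rw [h1, h2, Finset.card_compl]
  have : (S.card : ℝ) ≤ (Fintype.card V : ℝ) := by
    exact_mod_cast Finset.card_le_univ S
  unfold moranW
  rw [nsmul_eq_mul, nsmul_eq_mul, Nat.cast_sub (Finset.card_le_univ S)]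
  ring

lemma sum_nbr_swap (F : V → V → ℝ) :
    ∑ x : V, ∑ y ∈ G.neighborFinset x, F x y
      = ∑ x : V, ∑ y ∈ G.neighborFinset x, F y x := by
  have key : ∀ Fn : V → V → ℝ, ∑ x : V, ∑ y ∈ G.neighborFinset x, Fn x y
      = ∑ x : V, ∑ y : V, if G.Adj x y then Fn x y else 0 := by
    intro Fn
    refine Finset.sum_congr rfl fun x _ => ?_
    rw [SimpleGraph.neighborFinset_eq_filter, Finset.sum_filter]
  rw [key, key, Finset.sum_comm]
  refine Finset.sum_congr rfl fun x _ => Finset.sum_congr rfl fun y _ => ?_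
  exact if_congr (G.adj_comm y x) rfl rfl

lemma moranP_exp (r : ℝ) (S : Finset V) (f : Finset V → ℝ) :
    ∑ T : Finset V, moranP G r S T * f T
      = ∑ x : V, ∑ y ∈ G.neighborFinset x,
          (if x ∈ S then r else 1) / (moranW r S * G.degree x) *
            f (if x ∈ S then insert y S else S.erase y) := by
  unfold moranP
  simp only [Finset.sum_mul]
  rw [Finset.sum_comm]
  refine Finset.sum_congr rfl fun x _ => ?_
  rw [Finset.sum_comm]
  refine Finset.sum_congr rfl fun y _ => ?_
  simp only [mul_assoc, ite_mul, one_mul, zero_mul, mul_ite, mul_zero]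
  rw [Finset.sum_ite_eq]
  simp

lemma moran_c_sum (r : ℝ) (hr : 1 < r) (hn : 2 ≤ Fintype.card V)
    (hdeg : ∀ x : V, 0 < G.degree x) (S : Finset V) :
    ∑ x : V, ∑ _y ∈ G.neighborFinset x,
        (if x ∈ S then r else 1) / (moranW r S * G.degree x) = 1 := by
  have hW := moranW_pos (V := V) r hr S hn
  have step : ∀ x : V, ∑ _y ∈ G.neighborFinset x,
      (if x ∈ S then r else 1) / (moranW r S * G.degree x)
        = (if x ∈ S then r else 1) / moranW r S := by
    intro x
    rw [Finset.sum_const, G.card_neighborFinset_eq_degree, nsmul_eq_mul]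
    have hd : (G.degree x : ℝ) ≠ 0 := by exact_mod_cast (hdeg x).ne'
    field_simp
  rw [Finset.sum_congr rfl fun x _ => step x, ← Finset.sum_div, sum_fitness]
  field_simp

lemma moranP_rowsum (r : ℝ) (hr : 1 < r) (hn : 2 ≤ Fintype.card V)
    (hdeg : ∀ x : V, 0 < G.degree x) (S : Finset V) :
    ∑ T : Finset V, moranP G r S T = 1 := by
  have := moranP_exp G r S (fun _ => (1:ℝ))
  simp only [mul_one] at this
  rw [this, moran_c_sum G r hr hn hdeg S]

lemma moran_drift (hG : G.Connected) (hn : 2 ≤ Fintype.card V) (r : ℝ) (hr : 1 < r)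
    (S : Finset V) (hS0 : S ≠ ∅) (hS1 : S ≠ Finset.univ) :
    moranPhi G S + (r - 1) / (r * (Fintype.card V : ℝ) ^ 3) <
      ∑ T : Finset V, moranP G r S T * moranPhi G T := by
  classical
  have hdeg := moran_deg_pos G hG hn
  have hW := moranW_pos (V := V) r hr S hn
  set W : ℝ := moranW r S with hWdef
  -- pointwise decomposition of the expected new potential
  have point : ∀ x : V, ∀ y ∈ G.neighborFinset x,
      (if x ∈ S then r else 1) / (W * G.degree x) *
        moranPhi G (if x ∈ S then insert y S else S.erase y)
      = (if x ∈ S then r else 1) / (W * G.degree x) * moranPhi G S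
        + ((if x ∈ S ∧ y ∉ S then r / (W * G.degree x * G.degree y) else 0)
          - (if x ∉ S ∧ y ∈ S then 1 / (W * G.degree x * G.degree y) else 0)) := by
    intro x y _
    have hdx : (G.degree x : ℝ) ≠ 0 := by exact_mod_cast (hdeg x).ne'
    have hdy : (G.degree y : ℝ) ≠ 0 := by exact_mod_cast (hdeg y).ne'
    by_cases hx : x ∈ S
    · by_cases hys : y ∈ S
      · simp [hx, hys, Finset.insert_eq_self.2 hys]
      · simp only [hx, hys, if_true, if_false, not_true, not_false_iff, and_true, true_and,
          and_false, false_and, sub_zero]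
        unfold moranPhi
        rw [Finset.sum_insert hys]
        field_simp
        ring
    · by_cases hys : y ∈ S
      · simp only [hx, hys, if_false, if_true, not_true, not_false_iff, and_true, true_and,
          and_false, false_and, zero_sub]
        unfold moranPhi
        rw [Finset.sum_erase_eq_sub hys]
        field_simp
        ring
      · simp [hx, hys, Finset.erase_eq_of_notMem hys]
  have hE : ∑ T : Finset V, moranP G r S T * moranPhi G T
      = moranPhi G S
        + ∑ x : V, ∑ y ∈ G.neighborFinset x,
            ((if x ∈ S ∧ y ∉ S then r / (W * G.degree x * G.degree y) else 0)
              - (if x ∉ S ∧ y ∈ S then 1 / (W * G.degree x * G.degree y) else 0)) := by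
    rw [moranP_exp G r S (moranPhi G)]
    rw [Finset.sum_congr rfl fun x _ => Finset.sum_congr rfl (point x)]
    rw [Finset.sum_congr rfl fun x _ => Finset.sum_add_distrib,
        Finset.sum_add_distrib]
    congr 1
    rw [Finset.sum_congr rfl fun x (_ : x ∈ Finset.univ) => (Finset.sum_mul _ _ _).symm,
        ← Finset.sum_mul, moran_c_sum G r hr hn hdeg S, one_mul]
  -- swap the negative part
  have hswap : ∑ x : V, ∑ y ∈ G.neighborFinset x,
      (if x ∉ S ∧ y ∈ S then 1 / (W * G.degree x * G.degree y) else 0)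
      = ∑ x : V, ∑ y ∈ G.neighborFinset x,
        (if x ∈ S ∧ y ∉ S then 1 / (W * G.degree x * G.degree y) else 0) := by
    rw [sum_nbr_swap]
    refine Finset.sum_congr rfl fun x _ => Finset.sum_congr rfl fun y _ => ?_
    by_cases hc : x ∈ S ∧ y ∉ S
    · rw [if_pos ⟨hc.2, hc.1⟩, if_pos hc]; ring
    · rw [if_neg, if_neg hc]
      tauto
  have hcomb : ∀ x : V, ∀ y ∈ G.neighborFinset x,
      ((if x ∈ S ∧ y ∉ S then r / (W * G.degree x * G.degree y) else 0)
        - (if x ∈ S ∧ y ∉ S then 1 / (W * G.degree x * G.degree y) else 0))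
      = (if x ∈ S ∧ y ∉ S then (r - 1) / (W * G.degree x * G.degree y) else 0) := by
    intro x y _
    by_cases hc : x ∈ S ∧ y ∉ S
    · rw [if_pos hc, if_pos hc, if_pos hc, div_sub_div_same]
    · simp [hc]
  have hE2 : ∑ T : Finset V, moranP G r S T * moranPhi G T
      = moranPhi G S
        + ∑ x : V, ∑ y ∈ G.neighborFinset x,
            (if x ∈ S ∧ y ∉ S then (r - 1) / (W * G.degree x * G.degree y) else 0) := by
    rw [hE]
    congr 1
    rw [Finset.sum_congr rfl fun x _ => Finset.sum_sub_distrib _ _, Finset.sum_sub_distrib,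
        hswap, ← Finset.sum_sub_distrib]
    rw [Finset.sum_congr rfl fun x _ => (Finset.sum_sub_distrib _ _).symm]
    exact Finset.sum_congr rfl fun x _ => Finset.sum_congr rfl (hcomb x)
  rw [hE2]
  have hterm_nonneg : ∀ x y : V,
      0 ≤ (if x ∈ S ∧ y ∉ S then (r - 1) / (W * G.degree x * G.degree y) else 0) := by
    intro x y
    split
    · apply div_nonneg (by linarith)
      have := hdeg x; have := hdeg y
      positivity
    · exact le_refl _
  -- boundary edge
  obtain ⟨a, haS⟩ := Finset.nonempty_iff_ne_empty.2 hS0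
  obtain ⟨b, hbS⟩ : ∃ b, b ∉ S := by
    by_contra hc
    push_neg at hc
    exact hS1 (Finset.eq_univ_iff_forall.2 hc)
  obtain ⟨w⟩ := hG.preconnected a b
  obtain ⟨d, _, hd1, hd2⟩ := w.exists_boundary_dart (↑S : Set V)
    (Finset.mem_coe.2 haS) (fun hm => hbS (Finset.mem_coe.1 hm))
  set x0 := d.fst
  set y0 := d.snd
  have hadj : G.Adj x0 y0 := d.adj
  have hx0 : x0 ∈ S := Finset.mem_coe.1 hd1
  have hy0 : y0 ∉ S := fun hm => hd2 (Finset.mem_coe.2 hm)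
  have hy0mem : y0 ∈ G.neighborFinset x0 := (SimpleGraph.mem_neighborFinset _ _ _).2 hadj
  have hn' : (2:ℝ) ≤ (Fintype.card V : ℝ) := by exact_mod_cast hn
  have hdx : (0:ℝ) < (G.degree x0 : ℝ) := by exact_mod_cast hdeg x0
  have hdy : (0:ℝ) < (G.degree y0 : ℝ) := by exact_mod_cast hdeg y0
  have hdxn : (G.degree x0 : ℝ) < (Fintype.card V : ℝ) := by
    exact_mod_cast G.degree_lt_card_verts x0
  have hdyn : (G.degree y0 : ℝ) < (Fintype.card V : ℝ) := by
    exact_mod_cast G.degree_lt_card_verts y0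
  have hcard : (S.card : ℝ) ≤ (Fintype.card V : ℝ) - 1 := by
    have : S.card < Fintype.card V := by
      rw [← Finset.card_univ]
      exact Finset.card_lt_card (Finset.ssubset_univ_iff.2 hS1)
    have : S.card ≤ Fintype.card V - 1 := by omega
    have h2 := hn
    calc (S.card : ℝ) ≤ ((Fintype.card V - 1 : ℕ) : ℝ) := by exact_mod_cast this
      _ = (Fintype.card V : ℝ) - 1 := by
          rw [Nat.cast_sub (by omega)]; simp
  have hWlt : W < r * (Fintype.card V : ℝ) := by
    rw [hWdef]; unfold moranW; nlinarith
  have hdenom : W * (G.degree x0 : ℝ) * (G.degree y0 : ℝ)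
      < r * (Fintype.card V : ℝ) ^ 3 := by
    have h1 := mul_lt_mul'' (mul_lt_mul'' hWlt hdxn hW.le hdx.le) hdyn (by positivity) hdy.le
    nlinarith [h1]
  have hdenompos : 0 < W * (G.degree x0 : ℝ) * (G.degree y0 : ℝ) := by positivity
  have hterm : (r - 1) / (r * (Fintype.card V : ℝ) ^ 3)
      < (if x0 ∈ S ∧ y0 ∉ S then (r - 1) / (W * G.degree x0 * G.degree y0) else 0) := by
    rw [if_pos ⟨hx0, hy0⟩]
    exact div_lt_div_of_pos_left (by linarith) hdenompos hdenom
  have hchain : (if x0 ∈ S ∧ y0 ∉ S then (r - 1) / (W * G.degree x0 * G.degree y0) else 0)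
      ≤ ∑ x : V, ∑ y ∈ G.neighborFinset x,
          (if x ∈ S ∧ y ∉ S then (r - 1) / (W * G.degree x * G.degree y) else 0) := by
    calc _ ≤ ∑ y ∈ G.neighborFinset x0,
          (if x0 ∈ S ∧ y ∉ S then (r - 1) / (W * G.degree x0 * G.degree y) else 0) :=
        Finset.single_le_sum (fun y _ => hterm_nonneg x0 y) hy0mem
      _ ≤ _ :=
        Finset.single_le_sum
          (f := fun x => ∑ y ∈ G.neighborFinset x,
            (if x ∈ S ∧ y ∉ S then (r - 1) / (W * G.degree x * G.degree y) else 0))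
          (fun x _ => Finset.sum_nonneg fun y _ => hterm_nonneg x y)
          (Finset.mem_univ x0)
  linarith

lemma moranP_nonneg' (r : ℝ) (hr : 1 < r) (hn : 2 ≤ Fintype.card V) (S T : Finset V) :
    0 ≤ moranP G r S T := by
  have hW := moranW_pos (V := V) r hr S hn
  refine Finset.sum_nonneg fun x _ => Finset.sum_nonneg fun y _ => mul_nonneg ?_ ?_
  · apply div_nonneg
    · split <;> linarith
    · exact mul_nonneg hW.le (Nat.cast_nonneg _)
  · split <;> split <;> norm_num

end MoranAux

/-- For a finite connected graph on `n ≥ 2` vertices and `r > 1`, the expected absorption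
time of the Moran process with a uniformly random initial mutant is at most
`(r/(r-1))·n³·φ(G) ≤ (r/(r-1))·n⁴`, where `φ(G) = ∑_{x ∈ V} 1/deg x`. -/
theorem stmt_10 {V : Type*} [Fintype V] [DecidableEq V] (G : SimpleGraph V)
    [DecidableRel G.Adj] (hG : G.Connected) (hn : 2 ≤ Fintype.card V)
    (r : ℝ) (hr : 1 < r)
    (h : Finset V → ℝ) (hpos : ∀ S, 0 ≤ h S)
    (habs0 : h ∅ = 0) (habs1 : h Finset.univ = 0)
    (hrec : ∀ S : Finset V, S ≠ ∅ → S ≠ Finset.univ →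
      h S = 1 + ∑ T : Finset V, moranP G r S T * h T) :
    (1 / (Fintype.card V : ℝ)) * ∑ x : V, h {x} ≤
        (r / (r - 1)) * (Fintype.card V : ℝ) ^ 3 * moranPhi G Finset.univ ∧
    (r / (r - 1)) * (Fintype.card V : ℝ) ^ 3 * moranPhi G Finset.univ ≤
        (r / (r - 1)) * (Fintype.card V : ℝ) ^ 4 := by
  classical
  have hdeg := moran_deg_pos G hG hn
  have hn' : (2:ℝ) ≤ (Fintype.card V : ℝ) := by exact_mod_cast hn
  set n : ℝ := (Fintype.card V : ℝ) with hndef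
  set k : ℝ := (r - 1) / (r * n ^ 3) with hkdef
  have hnpos : (0:ℝ) < n := by linarith
  have hk : 0 < k := div_pos (by linarith) (by positivity)
  have hphinonneg : ∀ S : Finset V, 0 ≤ moranPhi G S := by
    intro S
    refine Finset.sum_nonneg fun i _ => by positivity
  have hphile : ∀ S : Finset V, moranPhi G S ≤ moranPhi G Finset.univ := by
    intro S
    exact Finset.sum_le_sum_of_subset_of_nonneg (Finset.subset_univ S)
      (fun i _ _ => by positivity)
  have key : ∀ S : Finset V, h S ≤ (moranPhi G Finset.univ - moranPhi G S) / k := by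
    by_contra hc
    push_neg at hc
    obtain ⟨S₀, hS₀⟩ := hc
    obtain ⟨M, _, hM⟩ := Finset.exists_max_image (Finset.univ : Finset (Finset V))
      (fun S => h S - (moranPhi G Finset.univ - moranPhi G S) / k) Finset.univ_nonempty
    have hgM : 0 < h M - (moranPhi G Finset.univ - moranPhi G M) / k :=
      lt_of_lt_of_le (by linarith) (hM S₀ (Finset.mem_univ _))
    have hM0 : M ≠ ∅ := by
      rintro rfl
      have he : moranPhi G (∅ : Finset V) = 0 := by simp [moranPhi]
      rw [habs0, he, sub_zero] at hgM
      have := div_nonneg (hphinonneg Finset.univ) hk.le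
      linarith
    have hM1 : M ≠ Finset.univ := by
      rintro rfl
      rw [habs1, sub_self, zero_div, sub_zero] at hgM
      exact lt_irrefl _ hgM
    have hrecM := hrec M hM0 hM1
    have hdrift := moran_drift G hG hn r hr M hM0 hM1
    have hrow := moranP_rowsum G r hr hn hdeg M
    have hexp : ∑ T : Finset V, moranP G r M T *
        (h T - (moranPhi G Finset.univ - moranPhi G T) / k)
        = (∑ T : Finset V, moranP G r M T * h T)
          - (moranPhi G Finset.univ * (∑ T : Finset V, moranP G r M T)
            - ∑ T : Finset V, moranP G r M T * moranPhi G T) / k := by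
      have hpt : ∀ T : Finset V, moranP G r M T *
          (h T - (moranPhi G Finset.univ - moranPhi G T) / k)
          = moranP G r M T * h T
            - (moranPhi G Finset.univ * moranP G r M T
              - moranP G r M T * moranPhi G T) / k := by
        intro T
        field_simp
      rw [Finset.sum_congr rfl fun T _ => hpt T, Finset.sum_sub_distrib, ← Finset.sum_div]
      congr 1
      rw [Finset.sum_sub_distrib, Finset.mul_sum]
    have hle : ∑ T : Finset V, moranP G r M T *
        (h T - (moranPhi G Finset.univ - moranPhi G T) / k)
        ≤ h M - (moranPhi G Finset.univ - moranPhi G M) / k := by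
      calc ∑ T : Finset V, moranP G r M T *
            (h T - (moranPhi G Finset.univ - moranPhi G T) / k)
          ≤ ∑ T : Finset V, moranP G r M T *
            (h M - (moranPhi G Finset.univ - moranPhi G M) / k) :=
            Finset.sum_le_sum fun T _ =>
              mul_le_mul_of_nonneg_left (hM T (Finset.mem_univ T))
                (moranP_nonneg' G r hr hn M T)
        _ = h M - (moranPhi G Finset.univ - moranPhi G M) / k := by
            rw [← Finset.sum_mul, hrow, one_mul]
    rw [hexp, hrow, mul_one] at hle
    have hdiff : moranPhi G Finset.univ - (∑ T : Finset V, moranP G r M T * moranPhi G T)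
        < (moranPhi G Finset.univ - moranPhi G M) - k := by
      have : moranPhi G M + k < ∑ T : Finset V, moranP G r M T * moranPhi G T := by
        rw [hkdef]; exact hdrift
      linarith
    have h2 : (moranPhi G Finset.univ - ∑ T : Finset V, moranP G r M T * moranPhi G T) / k
        < (moranPhi G Finset.univ - moranPhi G M) / k - 1 := by
      have h3 := (div_lt_div_iff_of_pos_right hk).2 hdiff
      rw [sub_div (moranPhi G Finset.univ - moranPhi G M) k k, div_self hk.ne'] at h3
      exact h3
    linarith
  -- final bounds
  have hb : ∀ x : V, h {x} ≤ moranPhi G Finset.univ / k := by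
    intro x
    refine (key {x}).trans ?_
    gcongr
    linarith [hphinonneg ({x} : Finset V)]
  have hsum : ∑ x : V, h {x} ≤ n * (moranPhi G Finset.univ / k) := by
    calc ∑ x : V, h {x} ≤ ∑ _x : V, moranPhi G Finset.univ / k :=
          Finset.sum_le_sum fun x _ => hb x
      _ = n * (moranPhi G Finset.univ / k) := by
          rw [Finset.sum_const, nsmul_eq_mul, Finset.card_univ]
  have heq : moranPhi G Finset.univ / k = (r / (r - 1)) * n ^ 3 * moranPhi G Finset.univ := by
    rw [hkdef]
    have h1 : r - 1 ≠ 0 := by linarith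
    have h2 : r ≠ 0 := by linarith
    have h3 : n ≠ 0 := by linarith
    field_simp
  constructor
  · have hsum' : (1 / n) * ∑ x : V, h {x} ≤ (1 / n) * (n * (moranPhi G Finset.univ / k)) :=
      mul_le_mul_of_nonneg_left hsum (by positivity)
    have : (1 / n) * (n * (moranPhi G Finset.univ / k)) = moranPhi G Finset.univ / k := by
      field_simp
    rw [this, heq] at hsum'
    exact hsum'
  · have hphin : moranPhi G Finset.univ ≤ n := by
      unfold moranPhi
      calc ∑ x : V, (1:ℝ) / G.degree x ≤ ∑ _x : V, (1:ℝ) := by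
            refine Finset.sum_le_sum fun x _ => ?_
            rw [div_le_one (by exact_mod_cast hdeg x)]
            exact_mod_cast hdeg x
        _ = n := by rw [Finset.sum_const, nsmul_eq_mul, Finset.card_univ, mul_one]
    have hc : (0:ℝ) ≤ (r / (r - 1)) * n ^ 3 := by
      apply mul_nonneg (div_nonneg (by linarith) (by linarith)) (by positivity)
    calc (r / (r - 1)) * n ^ 3 * moranPhi G Finset.univ
        ≤ (r / (r - 1)) * n ^ 3 * n := mul_le_mul_of_nonneg_left hphin hc
      _ = (r / (r - 1)) * n ^ 4 := by ring
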